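/- Let K be a field of characteristic ≠ 2,3, Δ ∈ K*, L = K[δ] with δ² = −3Δ, and let z = x+yδ ∈ L* satisfy N(z) = x²+3Δy² = P³ with P ∈ K*. If y ≠ 0, then the binary cubic g with coefficients (a,b,c,d) = (2y/3, 0, −P/2y, x/6y²) has discriminant Δ, seminvariant U(g) = 2x, and seminvariant P(g) = P; if y = 0, the cubic with coefficients (0, x/P, 0, −Δ/4x) has discriminant Δ. -/

import Mathlib

/-- Discriminant of the binary cubic `aX³+bX²Y+cXY²+dY³`. -/
def cubicDisc {K : Type*} [CommRing K] (a b c d : K) : K :=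
  b^2*c^2 - 4*a*c^3 - 4*b^3*d - 27*a^2*d^2 + 18*a*b*c*d

/-- Seminvariant `P = b²−3ac` of the binary cubic `aX³+bX²Y+cXY²+dY³`. -/
def semP {K : Type*} [CommRing K] (a b c : K) : K := b^2 - 3*a*c

/-- Seminvariant `U = 2b³+27a²d−9abc` of the binary cubic `aX³+bX²Y+cXY²+dY³`. -/
def semU {K : Type*} [CommRing K] (a b c d : K) : K := 2*b^3 + 27*a^2*d - 9*a*b*c

/-- Surjectivity construction for the Cardano invariant: if
`x² + 3Δy² = P³` with `Δ, P ∈ K*`, then for `y ≠ 0` the binary cubic with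
coefficients `(2y/3, 0, −P/2y, x/6y²)` has discriminant `Δ`, `U = 2x` and
seminvariant `P`; and for `y = 0` the cubic with coefficients
`(0, x/P, 0, −Δ/4x)` has discriminant `Δ`. -/
theorem cardano_invariant_surjective_construction {K : Type*} [Field K]
    (h2 : (2:K) ≠ 0) (h3 : (3:K) ≠ 0)
    (Δ P x y : K) (hΔ : Δ ≠ 0) (hP : P ≠ 0)
    (hnorm : x^2 + 3*Δ*y^2 = P^3) :
    (y ≠ 0 →
      cubicDisc (2*y/3) 0 (-P/(2*y)) (x/(6*y^2)) = Δ ∧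
      semU (2*y/3) 0 (-P/(2*y)) (x/(6*y^2)) = 2*x ∧
      semP (2*y/3) 0 (-P/(2*y)) = P)
    ∧ (y = 0 → cubicDisc 0 (x/P) 0 (-Δ/(4*x)) = Δ) := by
  have h4 : (4:K) ≠ 0 := by
    have : (4:K) = 2*2 := by norm_num
    rw [this]; exact mul_ne_zero h2 h2
  have h6 : (6:K) ≠ 0 := by
    have : (6:K) = 2*3 := by norm_num
    rw [this]; exact mul_ne_zero h2 h3
  have h324 : (324:K) ≠ 0 := by
    have : (324:K) = 6*6*3*3 := by norm_num
    rw [this]; exact mul_ne_zero (mul_ne_zero (mul_ne_zero h6 h6) h3) h3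
  have h54 : (54:K) ≠ 0 := by
    have : (54:K) = 6*3*3 := by norm_num
    rw [this]; exact mul_ne_zero (mul_ne_zero h6 h3) h3
  have h7776 : (7776:K) ≠ 0 := by
    have : (7776:K) = 6*6*6*6*6 := by norm_num
    rw [this]
    exact mul_ne_zero (mul_ne_zero (mul_ne_zero (mul_ne_zero h6 h6) h6) h6) h6
  have h16 : (16:K) ≠ 0 := by
    have : (16:K) = 4*4 := by norm_num
    rw [this]; exact mul_ne_zero h4 h4
  constructor
  · intro hy
    refine ⟨?_, ?_, ?_⟩
    · unfold cubicDisc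
      field_simp
      linear_combination (-432) * hnorm
    · unfold semU
      field_simp
      ring
    · unfold semP
      field_simp
      ring
  · intro hy
    subst hy
    have hx : x ≠ 0 := by
      intro h; subst h; simp at hnorm
      exact hP (pow_eq_zero_iff (by norm_num) |>.mp hnorm.symm)
    unfold cubicDisc
    field_simp
    linear_combination (16*x^2*Δ) * hnorm
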